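/- A stationary finitely dependent coloring of ℤ cannot be a Markov chain: for every q ≥ 1 and every k ∈ ℕ, there is no probability measure μ on ℤ → Fin q that is simultaneously stationary, a q-coloring, k-dependent, and Markov. -/

import Mathlib

open MeasureTheory ProbabilityTheory

/-- Configurations: colorings of `ℤ` with `q` colors, with the product σ-algebra. -/
abbrev Config (q : ℕ) : Type := ℤ → Fin q

/-- The left shift on configurations: `shift x n = x (n + 1)`. -/
def shift {q : ℕ} (x : Config q) : Config q := fun n => x (n + 1)

/-- A measure on configurations is stationary if it is invariant under the shift. -/
def IsStationaryConfig {q : ℕ} (μ : Measure (Config q)) : Prop :=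
  μ.map shift = μ

/-- A measure on configurations is a (proper) `q`-coloring if almost surely adjacent
coordinates take different values. -/
def IsColoring {q : ℕ} (μ : Measure (Config q)) : Prop :=
  ∀ᵐ x ∂μ, ∀ n : ℤ, x n ≠ x (n + 1)

/-- The σ-algebra on configurations generated by the coordinates in `A ⊆ ℤ`. -/
def coordSigma (q : ℕ) (A : Set ℤ) : MeasurableSpace (Config q) :=
  ⨆ a ∈ A, MeasurableSpace.comap (fun x : Config q => x a) inferInstance

/-- A measure on configurations is `k`-dependent if the σ-algebras generated by the
coordinates in any two sets `A, B ⊆ ℤ` with `|a - b| > k` for all `a ∈ A`, `b ∈ B`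
are independent. -/
def KDependent {q : ℕ} (k : ℕ) (μ : Measure (Config q)) : Prop :=
  ∀ A B : Set ℤ, (∀ a ∈ A, ∀ b ∈ B, (k : ℤ) < |a - b|) →
    Indep (coordSigma q A) (coordSigma q B) μ

/-- The σ-algebra generated by a set of coordinates is a sub-σ-algebra of the product
σ-algebra. -/
lemma coordSigma_le (q : ℕ) (A : Set ℤ) :
    coordSigma q A ≤ (inferInstance : MeasurableSpace (Config q)) :=
  iSup₂_le fun a _ => (measurable_pi_apply a).comap_le

/-- A measure on configurations is Markov if for every `n` the σ-algebras generated by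
the coordinates in `{m | m ≤ n}` and in `{m | n ≤ m}` are conditionally independent
given the σ-algebra generated by the coordinate `n`. -/
def IsMarkov (q : ℕ) (μ : Measure (Config q)) [IsFiniteMeasure μ] : Prop :=
  ∀ n : ℤ, CondIndep (coordSigma q {n})
    (coordSigma q {m | m ≤ n}) (coordSigma q {m | n ≤ m})
    (coordSigma_le q {n}) μ

namespace NoMarkov

variable {q : ℕ}

/-- The event that coordinate `n` equals `a`. -/
def ev (n : ℤ) (a : Fin q) : Set (Config q) := {x | x n = a}

lemma ev_eq_preimage (n : ℤ) (a : Fin q) :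
    ev n a = (fun x : Config q => x n) ⁻¹' {a} := rfl

lemma measurable_ev (n : ℤ) (a : Fin q) : MeasurableSet (ev (q := q) n a) := by
  rw [ev_eq_preimage]
  exact measurable_pi_apply n (measurableSet_singleton a)

lemma ev_mem_coordSigma {A : Set ℤ} {n : ℤ} (hn : n ∈ A) (a : Fin q) :
    MeasurableSet[coordSigma q A] (ev n a) := by
  have h : MeasurableSpace.comap (fun x : Config q => x n) inferInstance ≤ coordSigma q A :=
    le_iSup₂ (f := fun i (_ : i ∈ A) =>
      MeasurableSpace.comap (fun x : Config q => x i) inferInstance) n hn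
  exact h _ ⟨{a}, measurableSet_singleton a, rfl⟩

lemma measurable_shift : Measurable (shift : Config q → Config q) :=
  measurable_pi_lambda _ fun n => measurable_pi_apply (n + 1)

lemma shift_iterate (j : ℕ) (x : Config q) : shift^[j] x = fun n => x (n + j) := by
  induction j with
  | zero => simp
  | succ j ih =>
    rw [Function.iterate_succ_apply', ih]
    funext n
    simp only [shift]
    congr 1
    push_cast
    ring

variable (μ : Measure (Config q)) [IsProbabilityMeasure μ]

lemma stat_apply (hstat : IsStationaryConfig μ) (j : ℕ) {E : Set (Config q)}
    (hE : MeasurableSet E) : μ (shift^[j] ⁻¹' E) = μ E := by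
  induction j with
  | zero => simp
  | succ j ih =>
    rw [Function.iterate_succ, Set.preimage_comp]
    have h1 : μ (shift ⁻¹' (shift^[j] ⁻¹' E)) = μ (shift^[j] ⁻¹' E) := by
      conv_rhs => rw [← hstat]
      rw [Measure.map_apply measurable_shift (measurable_shift.iterate j hE)]
    rw [h1, ih]

lemma shift_iterate_preimage_ev (j : ℕ) (n : ℤ) (a : Fin q) :
    shift^[j] ⁻¹' (ev n a) = ev (n + j) a := by
  ext x
  simp [ev, shift_iterate]

lemma stat_ev1 (hstat : IsStationaryConfig μ) (j : ℕ) (n : ℤ) (a : Fin q) :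
    μ (ev (n + j) a) = μ (ev n a) := by
  rw [← shift_iterate_preimage_ev, stat_apply μ hstat j (measurable_ev n a)]

lemma stat_ev2 (hstat : IsStationaryConfig μ) (j : ℕ) (n m : ℤ) (a b : Fin q) :
    μ (ev (n + j) a ∩ ev (m + j) b) = μ (ev n a ∩ ev m b) := by
  rw [← shift_iterate_preimage_ev, ← shift_iterate_preimage_ev, ← Set.preimage_inter,
    stat_apply μ hstat j ((measurable_ev n a).inter (measurable_ev m b))]


lemma coordSigma_singleton (n : ℤ) :
    coordSigma q {n} = MeasurableSpace.comap (fun x : Config q => x n) inferInstance := by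
  simp [coordSigma]

lemma comap_factor {n : ℤ} {f : Config q → ℝ}
    (hf : Measurable[MeasurableSpace.comap (fun x : Config q => x n) inferInstance] f)
    (x : Config q) : f x = f (fun _ => x n) := by
  obtain ⟨S, -, hS⟩ := hf (measurableSet_singleton (f (fun _ => x n)))
  have hy : (fun _ => x n : Config q) ∈ f ⁻¹' {f (fun _ => x n)} := rfl
  rw [← hS] at hy
  have hx : x ∈ (fun x : Config q => x n) ⁻¹' S := hy
  rw [hS] at hx
  exact hx


/-- The conditional expectation given coordinate `n` is a function of coordinate `n`. -/
lemma condexp_factor (n : ℤ) (u : Set (Config q)) (c : Fin q) :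
    ∀ x ∈ ev n c, (μ⟦u | coordSigma q {n}⟧) x = (μ⟦u | coordSigma q {n}⟧) (fun _ => c) := by
  intro x hx
  have hmeas : Measurable[MeasurableSpace.comap (fun x : Config q => x n) inferInstance]
      (μ⟦u | coordSigma q {n}⟧) := by
    rw [← coordSigma_singleton]
    exact stronglyMeasurable_condExp.measurable
  have hxn : x n = c := hx
  rw [comap_factor hmeas x, hxn]

set_option maxHeartbeats 2000000 in
lemma setIntegral_condexp_atom (n : ℤ) (u : Set (Config q)) (hu : MeasurableSet u)
    (c : Fin q) :
    ∫ x in ev n c, (μ⟦u | coordSigma q {n}⟧) x ∂μ = (μ (u ∩ ev n c)).toReal := by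
  rw [setIntegral_condExp (coordSigma_le q {n})
    ((integrable_const (1 : ℝ)).indicator hu) (ev_mem_coordSigma (Set.mem_singleton n) c)]
  rw [setIntegral_indicator hu]
  simp [Set.inter_comm]
  rfl

lemma condexp_atom (n : ℤ) (u : Set (Config q)) (hu : MeasurableSet u) (c : Fin q) :
    (μ (u ∩ ev n c)).toReal
      = (μ⟦u | coordSigma q {n}⟧) (fun _ => c) * (μ (ev n c)).toReal := by
  rw [← setIntegral_condexp_atom μ n u hu c,
    setIntegral_congr_fun (measurable_ev n c) (condexp_factor μ n u c)]
  simp [mul_comm]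
  rw [measureReal_def]; exact mul_comm _ _

set_option maxHeartbeats 1000000 in
lemma markov_key (hmarkov : IsMarkov q μ) (n : ℤ) {s t : Set (Config q)}
    (hs : MeasurableSet[coordSigma q {m | m ≤ n}] s)
    (ht : MeasurableSet[coordSigma q {m | n ≤ m}] t) (c : Fin q) :
    (μ (s ∩ t ∩ ev n c)).toReal * (μ (ev n c)).toReal
      = (μ (s ∩ ev n c)).toReal * (μ (t ∩ ev n c)).toReal := by
  have key := (condIndep_iff _ _ _ (coordSigma_le q {n})
    (coordSigma_le q _) (coordSigma_le q _) μ).mp (hmarkov n) s t hs ht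
  have hsm : MeasurableSet s := coordSigma_le q _ s hs
  have htm : MeasurableSet t := coordSigma_le q _ t ht
  have hprod : ∫ x in ev n c, ((μ⟦s | coordSigma q {n}⟧) * (μ⟦t | coordSigma q {n}⟧)) x ∂μ
      = ((μ⟦s | coordSigma q {n}⟧) (fun _ => c)) * ((μ⟦t | coordSigma q {n}⟧) (fun _ => c))
        * (μ (ev n c)).toReal := by
    rw [setIntegral_congr_fun (g := fun _ => ((μ⟦s | coordSigma q {n}⟧) (fun _ => c))
        * ((μ⟦t | coordSigma q {n}⟧) (fun _ => c))) (measurable_ev n c)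
      (fun x hx => by simp [condexp_factor μ n s c x hx, condexp_factor μ n t c x hx])]
    simp [mul_comm]
    rw [measureReal_def]; exact mul_comm _ _
  have hst : (μ (s ∩ t ∩ ev n c)).toReal
      = ((μ⟦s | coordSigma q {n}⟧) (fun _ => c)) * ((μ⟦t | coordSigma q {n}⟧) (fun _ => c))
        * (μ (ev n c)).toReal := by
    rw [← setIntegral_condexp_atom μ n _ (hsm.inter htm) c,
      setIntegral_congr_ae (measurable_ev n c) (key.mono fun x hx _ => hx)]
    exact hprod
  rw [hst, condexp_atom μ n s hsm c, condexp_atom μ n t htm c]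
  ring


lemma measure_partition (n : ℤ) (s : Set (Config q)) (hs : MeasurableSet s) :
    μ s = ∑ a : Fin q, μ (s ∩ ev n a) := by
  have h : s = ⋃ a ∈ (Finset.univ : Finset (Fin q)), s ∩ ev n a := by
    ext x; simp [ev]
  have h2 := measure_biUnion_finset (μ := μ)
    (fun a (_ : a ∈ (Finset.univ : Finset (Fin q))) b _ hab =>
      Set.disjoint_left.mpr fun x hxa hxb => hab (hxa.2.symm.trans hxb.2))
    (fun a (_ : a ∈ (Finset.univ : Finset (Fin q))) => hs.inter (measurable_ev n a))
  rw [← h] at h2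
  exact h2

noncomputable def pi0 (a : Fin q) : ℝ := (μ (ev 0 a)).toReal

noncomputable def pp (n : ℕ) (a b : Fin q) : ℝ := (μ (ev 0 a ∩ ev (n : ℤ) b)).toReal

noncomputable def rr (m n : ℕ) (a b c : Fin q) : ℝ :=
  (μ (ev 0 a ∩ ev ((m + n : ℕ) : ℤ) b ∩ ev (m : ℤ) c)).toReal

open Classical in
noncomputable def MM (n : ℕ) : Matrix (Fin q) (Fin q) ℝ :=
  Matrix.of fun a b => if pi0 μ a = 0 then pi0 μ b else pp μ n a b / pi0 μ a

lemma pi0_nonneg (a : Fin q) : 0 ≤ pi0 μ a := ENNReal.toReal_nonneg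

lemma pp_nonneg (n : ℕ) (a b : Fin q) : 0 ≤ pp μ n a b := ENNReal.toReal_nonneg

lemma rr_nonneg (m n : ℕ) (a b c : Fin q) : 0 ≤ rr μ m n a b c := ENNReal.toReal_nonneg

lemma ev_prob (hstat : IsStationaryConfig μ) (n : ℕ) (b : Fin q) :
    μ (ev (n : ℤ) b) = μ (ev 0 b) := by
  have h := stat_ev1 μ hstat n 0 b
  rwa [zero_add] at h

lemma stat_pair (hstat : IsStationaryConfig μ) (m n : ℕ) (c b : Fin q) :
    μ (ev (m : ℤ) c ∩ ev ((m : ℤ) + n) b) = μ (ev 0 c ∩ ev (n : ℤ) b) := by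
  have h := stat_ev2 μ hstat m 0 (n : ℤ) c b
  rw [zero_add, add_comm (n : ℤ) (m : ℤ)] at h
  exact h

lemma toReal_mono' {A B : Set (Config q)} (h : A ⊆ B) :
    (μ A).toReal ≤ (μ B).toReal :=
  ENNReal.toReal_mono (measure_ne_top μ B) (measure_mono h)

lemma pp_le_left (n : ℕ) (a b : Fin q) : pp μ n a b ≤ pi0 μ a :=
  toReal_mono' μ Set.inter_subset_left

lemma pp_le_right (hstat : IsStationaryConfig μ) (n : ℕ) (a b : Fin q) :
    pp μ n a b ≤ pi0 μ b := by
  have h : (μ (ev 0 a ∩ ev (n : ℤ) b)).toReal ≤ (μ (ev (n : ℤ) b)).toReal :=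
    toReal_mono' μ Set.inter_subset_right
  rwa [ev_prob μ hstat n b] at h

lemma rr_le (hstat : IsStationaryConfig μ) (m n : ℕ) (a b c : Fin q) :
    rr μ m n a b c ≤ pi0 μ c := by
  have h : (μ (ev 0 a ∩ ev ((m + n : ℕ) : ℤ) b ∩ ev (m : ℤ) c)).toReal
      ≤ (μ (ev (m : ℤ) c)).toReal := toReal_mono' μ Set.inter_subset_right
  rwa [ev_prob μ hstat m c] at h

lemma sum_pi0 : ∑ a : Fin q, pi0 μ a = 1 := by
  have h := measure_partition μ 0 Set.univ MeasurableSet.univ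
  simp only [Set.univ_inter, measure_univ] at h
  have := congrArg ENNReal.toReal h
  rw [ENNReal.toReal_sum (fun a _ => measure_ne_top μ _)] at this
  simpa [pi0] using this.symm

lemma sum_pp_row (n : ℕ) (a : Fin q) : ∑ b : Fin q, pp μ n a b = pi0 μ a := by
  have h := measure_partition μ (n : ℤ) (ev 0 a) (measurable_ev 0 a)
  have := congrArg ENNReal.toReal h
  rw [ENNReal.toReal_sum (fun a _ => measure_ne_top μ _)] at this
  exact this.symm

lemma sum_pp_col (hstat : IsStationaryConfig μ) (n : ℕ) (b : Fin q) :
    ∑ c : Fin q, pp μ n c b = pi0 μ b := by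
  have h := measure_partition μ 0 (ev (n : ℤ) b) (measurable_ev _ b)
  rw [ev_prob μ hstat n b] at h
  have := congrArg ENNReal.toReal h
  rw [ENNReal.toReal_sum (fun a _ => measure_ne_top μ _)] at this
  have h3 : ∀ c, pp μ n c b = (μ (ev (n : ℤ) b ∩ ev 0 c)).toReal := fun c => by
    rw [pp, Set.inter_comm]
  rw [Finset.sum_congr rfl fun c _ => h3 c, ← this]
  rfl

lemma sum_rr (m n : ℕ) (a b : Fin q) :
    ∑ c : Fin q, rr μ m n a b c = pp μ (m + n) a b := by
  have h := measure_partition μ (m : ℤ) (ev 0 a ∩ ev ((m + n : ℕ) : ℤ) b)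
    ((measurable_ev 0 a).inter (measurable_ev _ b))
  have := congrArg ENNReal.toReal h
  rw [ENNReal.toReal_sum (fun a _ => measure_ne_top μ _)] at this
  exact this.symm

lemma rr_eq (hstat : IsStationaryConfig μ) (hmarkov : IsMarkov q μ) (m n : ℕ)
    (a b c : Fin q) :
    rr μ m n a b c * pi0 μ c = pp μ m a c * pp μ n c b := by
  have hs : MeasurableSet[coordSigma q {j | j ≤ (m : ℤ)}] (ev 0 a) :=
    ev_mem_coordSigma (show (0 : ℤ) ∈ {j : ℤ | j ≤ (m : ℤ)} from Int.natCast_nonneg m) a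
  have ht : MeasurableSet[coordSigma q {j | (m : ℤ) ≤ j}] (ev ((m + n : ℕ) : ℤ) b) :=
    ev_mem_coordSigma (show ((m + n : ℕ) : ℤ) ∈ {j : ℤ | (m : ℤ) ≤ j} from by
      simp only [Set.mem_setOf_eq]
      exact_mod_cast Nat.le_add_right m n) b
  have key := markov_key μ hmarkov (m : ℤ) hs ht c
  rw [ev_prob μ hstat m c] at key
  have h2 : μ (ev ((m + n : ℕ) : ℤ) b ∩ ev (m : ℤ) c) = μ (ev 0 c ∩ ev (n : ℤ) b) := by
    rw [Set.inter_comm]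
    have := stat_pair μ hstat m n c b
    rwa [show ((m : ℤ) + n) = ((m + n : ℕ) : ℤ) by push_cast; ring] at this
  rw [h2] at key
  exact key

lemma pp_dep (hstat : IsStationaryConfig μ) (hdep : KDependent k μ) {n : ℕ}
    (hn : k + 1 ≤ n) (a b : Fin q) : pp μ n a b = pi0 μ a * pi0 μ b := by
  have hind := hdep {0} {(n : ℤ)} ?_
  · have h := (Indep_iff _ _ μ).mp hind (ev 0 a) (ev (n : ℤ) b)
      (ev_mem_coordSigma (Set.mem_singleton 0) a)
      (ev_mem_coordSigma (Set.mem_singleton _) b)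
    rw [ev_prob μ hstat n b] at h
    rw [pp, h, ENNReal.toReal_mul]
    rfl
  · intro i hi j hj
    rw [Set.mem_singleton_iff] at hi hj
    subst hi; subst hj
    rw [zero_sub, abs_neg, abs_of_nonneg (Int.natCast_nonneg n)]
    exact_mod_cast hn

lemma pp_diag (hcol : IsColoring μ) (a : Fin q) : pp μ 1 a a = 0 := by
  have h0 : μ (ev 0 a ∩ ev (1 : ℤ) a) = 0 := by
    have hnull : μ {x : Config q | ¬ ∀ n : ℤ, x n ≠ x (n + 1)} = 0 := by
      rw [← ae_iff] at *
      exact hcol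
    refine measure_mono_null ?_ hnull
    intro x hx hall
    exact hall 0 (hx.1.trans hx.2.symm)
  rw [pp, Nat.cast_one, h0, ENNReal.toReal_zero]


lemma matrix_no {ι : Type} [Fintype ι] [DecidableEq ι] (k : ℕ) (π : ι → ℝ)
    (M : ℕ → Matrix ι ι ℝ)
    (hsum : ∑ a, π a = 1)
    (hmul : ∀ m n, 1 ≤ m → 1 ≤ n → M (m + n) = M m * M n)
    (hdep : ∀ n, k + 1 ≤ n → M n = Matrix.of fun _ b => π b)
    (htr : Matrix.trace (M 1) = 0) : False := by
  set P := M 1 with hP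
  set Pi := Matrix.of (fun _ b : ι => π b) with hPi
  have hMP : ∀ m, 1 ≤ m → M m * P = M (m + 1) := fun m hm => (hmul m 1 hm le_rfl).symm
  have hPPi : ∀ m, 1 ≤ m → M m * Pi = Pi := by
    intro m hm
    calc M m * Pi = M m * M (k + 1) := by rw [hdep (k + 1) le_rfl]
    _ = M (m + (k + 1)) := (hmul m (k + 1) hm (by omega)).symm
    _ = Pi := hdep _ (by omega)
  have hPiP : Pi * P = Pi := by
    calc Pi * P = M (k + 1) * M 1 := by rw [hdep (k + 1) le_rfl, hP]
    _ = M (k + 1 + 1) := (hmul (k + 1) 1 (by omega) le_rfl).symm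
    _ = Pi := hdep _ (by omega)
  have hPiPi : Pi * Pi = Pi := by
    calc Pi * Pi = M (k + 1) * M (k + 1) := by rw [hdep (k + 1) le_rfl]
    _ = M (k + 1 + (k + 1)) := (hmul _ _ (by omega) (by omega)).symm
    _ = Pi := hdep _ (by omega)
  have hN : ∀ m, 1 ≤ m → (P - Pi) ^ m = M m - Pi := by
    intro m hm
    induction m with
    | zero => omega
    | succ m ih =>
      rcases Nat.eq_or_lt_of_le hm with h1 | h1
      · rw [← h1]; simp; exact hP
      · have hm1 : 1 ≤ m := by omega
        rw [pow_succ, ih hm1, Matrix.sub_mul, Matrix.mul_sub, Matrix.mul_sub,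
          hPPi m hm1, hPiP, hPiPi, hMP m hm1]
        abel
  have hnil : IsNilpotent (P - Pi) :=
    ⟨k + 1, by rw [hN (k + 1) (by omega), hdep (k + 1) le_rfl]; simp⟩
  have h0 : Matrix.trace (P - Pi) = 0 :=
    (Matrix.isNilpotent_trace_of_isNilpotent hnil).eq_zero
  have htrPi : Matrix.trace Pi = 1 := by
    simp only [hPi, Matrix.trace, Matrix.diag, Matrix.of_apply]
    exact hsum
  rw [Matrix.trace_sub, htr, htrPi] at h0
  norm_num at h0

end NoMarkov

open NoMarkov in
/-- A stationary finitely dependent coloring of `ℤ` cannot be a Markov chain: no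
probability measure on `ℤ → Fin q` is simultaneously stationary, a `q`-coloring,
`k`-dependent and Markov. -/
theorem no_markov_stationary_finitely_dependent_coloring (q k : ℕ) (hq : 1 ≤ q)
    (μ : Measure (Config q)) [IsProbabilityMeasure μ]
    (hstat : IsStationaryConfig μ) (hcol : IsColoring μ) (hdep : KDependent k μ)
    (hmarkov : IsMarkov q μ) : False := by
  classical
  refine matrix_no k (pi0 μ) (MM μ) (sum_pi0 μ) ?_ ?_ ?_
  · -- multiplicativity
    intro m n hm hn
    ext a b
    rw [Matrix.mul_apply]
    by_cases ha : pi0 μ a = 0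
    · simp only [MM, Matrix.of_apply, if_pos ha]
      have hterm : ∀ c : Fin q,
          pi0 μ c * (if pi0 μ c = 0 then pi0 μ b else pp μ n c b / pi0 μ c)
            = pp μ n c b := by
        intro c
        by_cases hc : pi0 μ c = 0
        · have hpc : pp μ n c b = 0 :=
            le_antisymm (hc ▸ pp_le_left μ n c b) (pp_nonneg μ n c b)
          simp [hc, hpc]
        · rw [if_neg hc]
          field_simp
      rw [Finset.sum_congr rfl fun c _ => hterm c, sum_pp_col μ hstat n b]
    · simp only [MM, Matrix.of_apply, if_neg ha]
      have hterm : ∀ c : Fin q,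
          pp μ m a c / pi0 μ a * (if pi0 μ c = 0 then pi0 μ b else pp μ n c b / pi0 μ c)
            = rr μ m n a b c / pi0 μ a := by
        intro c
        by_cases hc : pi0 μ c = 0
        · have hpc : pp μ m a c = 0 :=
            le_antisymm (hc ▸ pp_le_right μ hstat m a c) (pp_nonneg μ m a c)
          have hrr : rr μ m n a b c = 0 :=
            le_antisymm (hc ▸ rr_le μ hstat m n a b c) (rr_nonneg μ m n a b c)
          simp [hpc, hrr]
        · rw [if_neg hc]
          have h := rr_eq μ hstat hmarkov m n a b c
          have hr : rr μ m n a b c = pp μ m a c * pp μ n c b / pi0 μ c := by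
            rw [← h, mul_div_assoc, div_self hc, mul_one]
          rw [hr]
          ring
      rw [Finset.sum_congr rfl fun c _ => hterm c, ← Finset.sum_div, sum_rr μ m n a b]
  · -- long-range independence
    intro n hn
    ext a b
    by_cases ha : pi0 μ a = 0
    · simp [MM, ha]
    · simp only [MM, Matrix.of_apply, if_neg ha]
      rw [pp_dep μ hstat hdep hn a b, mul_comm, mul_div_assoc, div_self ha, mul_one]
  · -- zero trace from the coloring property
    have hdiag : ∀ a, MM μ 1 a a = 0 := by
      intro a
      by_cases ha : pi0 μ a = 0
      · simp [MM, ha]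
      · simp [MM, ha, pp_diag μ hcol a]
    simp [Matrix.trace, Matrix.diag, hdiag]
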